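/- arXiv:2310.05309 — 2 statements merged into one kernel-verified Lean document; each statement's English description precedes it below -/
import Mathlib

section
/- Let n ≥ 3 and let W be a real n×n matrix with zero diagonal (W_{ii} = 0 for all i) such that every row sum and every column sum of W is zero. Then the variance of σ ↦ ∑_{i=1}^n W_{i,σ(i)} over a uniformly random n-cycle σ of {1,…,n} is at least ‖W‖_F²/((n−1)(n−2)). -/
open Finset
open scoped BigOperators Classical

namespace VarCyc
open Equiv Equiv.Perm

noncomputable def K (n : ℕ) : Finset (Equiv.Perm (Fin n)) :=
  Finset.univ.filter (fun σ => σ.IsCycle ∧ σ.support = Finset.univ)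

noncomputable def D (n : ℕ) (i j k l : Fin n) : ℕ :=
  ((K n).filter (fun σ => σ i = j ∧ σ k = l)).card

variable {n : ℕ}

lemma mem_K {σ : Equiv.Perm (Fin n)} : σ ∈ K n ↔ σ.IsCycle ∧ σ.support = Finset.univ := by
  simp [K]

lemma apply_ne {σ : Equiv.Perm (Fin n)} (hσ : σ ∈ K n) (x : Fin n) : σ x ≠ x :=
  mem_support.mp (by rw [(mem_K.mp hσ).2]; exact mem_univ x)

lemma conj_mem_K {σ : Equiv.Perm (Fin n)} (hσ : σ ∈ K n) (π : Equiv.Perm (Fin n)) :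
    π * σ * π⁻¹ ∈ K n := by
  rcases mem_K.mp hσ with ⟨h1, h2⟩
  refine mem_K.mpr ⟨h1.conj, ?_⟩
  rw [support_conj, h2]
  ext x
  simp [Finset.mem_map]

lemma inv_mem_K {σ : Equiv.Perm (Fin n)} (hσ : σ ∈ K n) : σ⁻¹ ∈ K n := by
  rcases mem_K.mp hσ with ⟨h1, h2⟩
  exact mem_K.mpr ⟨h1.inv, by rw [support_inv, h2]⟩

lemma sq_apply_ne (hn : 3 ≤ n) {σ : Equiv.Perm (Fin n)} (hσ : σ ∈ K n) (x : Fin n) :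
    σ (σ x) ≠ x := by
  intro h
  rcases mem_K.mp hσ with ⟨h1, h2⟩
  have key : ∀ k : ℕ, (σ ^ k) x = x ∨ (σ ^ k) x = σ x := by
    intro k
    induction k with
    | zero => left; simp
    | succ m ih =>
      rw [pow_succ', Equiv.Perm.mul_apply]
      rcases ih with h' | h'
      · right; rw [h']
      · left; rw [h', h]
  have hsub : σ.support ⊆ {x, σ x} := by
    intro y hy
    obtain ⟨k, hk⟩ := h1.exists_pow_eq (apply_ne hσ x) (mem_support.mp hy)
    rcases key k with h' | h' <;> rw [hk] at h' <;> simp [h']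
  have hle : (Finset.univ : Finset (Fin n)).card ≤ ({x, σ x} : Finset (Fin n)).card := by
    rw [← h2]; exact Finset.card_le_card hsub
  simp only [Finset.card_univ, Fintype.card_fin] at hle
  have h2' : ({x, σ x} : Finset (Fin n)).card ≤ 2 := Finset.card_insert_le _ _ |>.trans (by simp)
  omega


lemma D_conj (π : Equiv.Perm (Fin n)) (i j k l : Fin n) :
    D n (π i) (π j) (π k) (π l) = D n i j k l := by
  unfold D
  refine Finset.card_bij' (fun σ _ => π⁻¹ * σ * π) (fun σ _ => π * σ * π⁻¹) ?_ ?_ ?_ ?_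
  · intro σ hσ
    simp only [Finset.mem_filter] at hσ ⊢
    obtain ⟨hK, hij, hkl⟩ := hσ
    refine ⟨by simpa using conj_mem_K hK π⁻¹, ?_, ?_⟩
    · simp only [Equiv.Perm.mul_apply]
      rw [show π i = π i from rfl] at hij
      simp [hij]
    · simp only [Equiv.Perm.mul_apply]
      simp [hkl]
  · intro σ hσ
    simp only [Finset.mem_filter] at hσ ⊢
    obtain ⟨hK, hij, hkl⟩ := hσ
    exact ⟨conj_mem_K hK π, by simp [Equiv.Perm.mul_apply, hij], by simp [Equiv.Perm.mul_apply, hkl]⟩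
  · intro σ _; group
  · intro σ _; group

lemma D_inv (i j k l : Fin n) : D n i j k l = D n j i l k := by
  unfold D
  refine Finset.card_bij' (fun σ _ => σ⁻¹) (fun σ _ => σ⁻¹) ?_ ?_ ?_ ?_
  · intro σ hσ
    simp only [Finset.mem_filter] at hσ ⊢
    obtain ⟨hK, hij, hkl⟩ := hσ
    exact ⟨inv_mem_K hK, by rw [← hij]; simp, by rw [← hkl]; simp⟩
  · intro σ hσ
    simp only [Finset.mem_filter] at hσ ⊢
    obtain ⟨hK, hij, hkl⟩ := hσ
    exact ⟨inv_mem_K hK, by rw [← hij]; simp, by rw [← hkl]; simp⟩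
  · intro σ _; simp
  · intro σ _; simp

lemma N_eq (i j : Fin n) : ((K n).filter fun σ => σ i = j).card = D n i j i j := by
  unfold D; congr 1; apply Finset.filter_congr; intro σ _; simp

lemma D_zero_of (i j k l : Fin n)
    (h : ∀ σ : Equiv.Perm (Fin n), σ ∈ K n → σ i = j → σ k = l → False) :
    D n i j k l = 0 := by
  unfold D
  rw [Finset.card_eq_zero, Finset.filter_eq_empty_iff]
  rintro σ hσ ⟨h1, h2⟩
  exact h σ hσ h1 h2

lemma D_diag_left (i k l : Fin n) : D n i i k l = 0 :=
  D_zero_of _ _ _ _ fun σ hσ h1 _ => apply_ne hσ i h1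

lemma D_diag_right (i j k : Fin n) : D n i j k k = 0 :=
  D_zero_of _ _ _ _ fun σ hσ _ h2 => apply_ne hσ k h2

lemma D_same_i {j l : Fin n} (i : Fin n) (hjl : j ≠ l) : D n i j i l = 0 :=
  D_zero_of _ _ _ _ fun σ _ h1 h2 => hjl (h1 ▸ h2 ▸ rfl)

lemma D_same_j {i k : Fin n} (j : Fin n) (hik : i ≠ k) : D n i j k j = 0 :=
  D_zero_of _ _ _ _ fun σ _ h1 h2 => hik (σ.injective (h1.trans h2.symm))

lemma D_rev (hn : 3 ≤ n) (i j : Fin n) : D n i j j i = 0 :=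
  D_zero_of _ _ _ _ fun σ hσ h1 h2 => sq_apply_ne hn hσ i (by rw [h1, h2])

lemma exists_ne_ne (hn : 3 ≤ n) (a b : Fin n) : ∃ x : Fin n, x ≠ a ∧ x ≠ b := by
  have h : 0 < ((Finset.univ : Finset (Fin n)) \ {a, b}).card := by
    have h1 : ({a, b} : Finset (Fin n)).card ≤ 2 :=
      (Finset.card_insert_le _ _).trans (by simp)
    have h2 := Finset.card_sdiff_of_subset (Finset.subset_univ ({a, b} : Finset (Fin n)))
    simp only [Finset.card_univ, Fintype.card_fin] at h2
    omega
  obtain ⟨x, hx⟩ := Finset.card_pos.mp h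
  simp only [Finset.mem_sdiff, Finset.mem_insert, Finset.mem_singleton] at hx
  exact ⟨x, by tauto, by tauto⟩

lemma N_swap_j {i j j' : Fin n} (hj : j ≠ i) (hj' : j' ≠ i) :
    D n i j i j = D n i j' i j' := by
  have := D_conj (Equiv.swap j j') i j i j
  rw [Equiv.swap_apply_of_ne_of_ne hj.symm hj'.symm, Equiv.swap_apply_left] at this
  exact this.symm

lemma N_swap_i {i i' j : Fin n} (hi : i ≠ j) (hi' : i' ≠ j) :
    D n i j i j = D n i' j i' j := by
  have := D_conj (Equiv.swap i i') i j i j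
  rw [Equiv.swap_apply_of_ne_of_ne hi.symm hi'.symm, Equiv.swap_apply_left] at this
  exact this.symm

lemma N_const (hn : 3 ≤ n) {i j i' j' : Fin n} (hij : i ≠ j) (hij' : i' ≠ j') :
    D n i j i j = D n i' j' i' j' := by
  obtain ⟨x, hxi, hxi'⟩ := exists_ne_ne hn i i'
  calc D n i j i j = D n i x i x := N_swap_j (Ne.symm hij) hxi
    _ = D n i' x i' x := N_swap_i (Ne.symm hxi).symm.symm (Ne.symm hxi').symm.symm
    _ = D n i' j' i' j' := (N_swap_j hxi' (Ne.symm hij')).symm ▸ rfl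

lemma sum_D (i j k : Fin n) : ∑ l, D n i j k l = ((K n).filter fun σ => σ i = j).card := by
  rw [Finset.card_eq_sum_card_fiberwise
    (f := fun σ => σ k) (t := Finset.univ) (fun σ _ => Finset.mem_univ _)]
  refine Finset.sum_congr rfl fun l _ => ?_
  unfold D
  rw [Finset.filter_filter]


/-- class b: `σ i = j`, `σ j = l` with `i,j,l` distinct. -/
lemma case_b (hn : 3 ≤ n) {i j l : Fin n} (hij : i ≠ j) (hli : l ≠ i) (hlj : l ≠ j) :
    (n - 2) * D n i j j l = D n i j i j := by
  have hsum : ∑ l', D n i j j l' = D n i j i j := by rw [sum_D, N_eq]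
  have hz : ∀ x ∈ (Finset.univ : Finset (Fin n)), x ∉ Finset.univ \ ({i, j} : Finset (Fin n)) →
      D n i j j x = 0 := by
    intro x _ hx
    simp only [Finset.mem_sdiff, Finset.mem_univ, true_and, not_not, Finset.mem_insert,
      Finset.mem_singleton] at hx
    rcases hx with rfl | rfl
    · exact D_rev hn _ _
    · exact D_diag_right _ _ _
  rw [← Finset.sum_subset (Finset.subset_univ _) hz] at hsum
  have hconst : ∀ x ∈ (Finset.univ : Finset (Fin n)) \ {i, j}, D n i j j x = D n i j j l := by
    intro x hx
    simp only [Finset.mem_sdiff, Finset.mem_univ, true_and, Finset.mem_insert,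
      Finset.mem_singleton, not_or] at hx
    obtain ⟨hxi, hxj⟩ := hx
    have := D_conj (Equiv.swap l x) i j j l
    rwa [Equiv.swap_apply_of_ne_of_ne (Ne.symm hli) (Ne.symm hxi),
      Equiv.swap_apply_of_ne_of_ne (Ne.symm hlj) (Ne.symm hxj), Equiv.swap_apply_left] at this
  rw [Finset.sum_congr rfl hconst, Finset.sum_const, smul_eq_mul] at hsum
  have hcard : ((Finset.univ : Finset (Fin n)) \ {i, j}).card = n - 2 := by
    rw [Finset.card_sdiff_of_subset (Finset.subset_univ _)]
    rw [Finset.card_insert_of_notMem (by simp [hij]), Finset.card_singleton,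
      Finset.card_univ, Fintype.card_fin]
  rw [hcard] at hsum
  exact hsum

/-- class c: `σ i = j`, `σ k = i` with `i,j,k` distinct. -/
lemma case_c (hn : 3 ≤ n) {i j k : Fin n} (hij : i ≠ j) (hki : k ≠ i) (hkj : k ≠ j) :
    (n - 2) * D n i j k i = D n i j i j := by
  rw [D_inv i j k i, case_b hn (Ne.symm hij) hkj hki]
  exact N_const hn (Ne.symm hij) hij

/-- class a: all of `i,j,k,l` distinct. -/
lemma case_a (hn : 3 ≤ n) {i j k l : Fin n} (hij : i ≠ j) (hik : i ≠ k) (hil : i ≠ l)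
    (hjk : j ≠ k) (hjl : j ≠ l) (hkl : k ≠ l) :
    (n - 2) * D n i j k l = D n i j i j := by
  have h4 : 4 ≤ n := by
    have hc4 : ({i, j, k, l} : Finset (Fin n)).card = 4 := by
      rw [Finset.card_insert_of_notMem (by simp [hij, hik, hil]),
        Finset.card_insert_of_notMem (by simp [hjk, hjl]),
        Finset.card_insert_of_notMem (by simp [hkl]), Finset.card_singleton]
    have := Finset.card_le_card (Finset.subset_univ ({i, j, k, l} : Finset (Fin n)))
    simp only [Finset.card_univ, Fintype.card_fin] at this
    omega
  have hsum : ∑ l', D n i j k l' = D n i j i j := by rw [sum_D, N_eq]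
  have hz : ∀ x ∈ (Finset.univ : Finset (Fin n)), x ∉ Finset.univ \ ({j, k} : Finset (Fin n)) →
      D n i j k x = 0 := by
    intro x _ hx
    simp only [Finset.mem_sdiff, Finset.mem_univ, true_and, not_not, Finset.mem_insert,
      Finset.mem_singleton] at hx
    rcases hx with rfl | rfl
    · exact D_same_j _ hik
    · exact D_diag_right _ _ _
  rw [← Finset.sum_subset (Finset.subset_univ _) hz] at hsum
  -- split off the element i
  have himem : i ∈ (Finset.univ : Finset (Fin n)) \ ({j, k} : Finset (Fin n)) := by
    simp [hij, hik]
  rw [← Finset.insert_erase himem, Finset.sum_insert (Finset.notMem_erase _ _)] at hsum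
  have hconst : ∀ x ∈ (((Finset.univ : Finset (Fin n)) \ {j, k}).erase i),
      D n i j k x = D n i j k l := by
    intro x hx
    simp only [Finset.mem_erase, Finset.mem_sdiff, Finset.mem_univ, true_and, Finset.mem_insert,
      Finset.mem_singleton, not_or] at hx
    obtain ⟨hxi, hxj, hxk⟩ := hx
    have := D_conj (Equiv.swap l x) i j k l
    rwa [Equiv.swap_apply_of_ne_of_ne hil (Ne.symm hxi),
      Equiv.swap_apply_of_ne_of_ne hjl (Ne.symm hxj),
      Equiv.swap_apply_of_ne_of_ne hkl (Ne.symm hxk), Equiv.swap_apply_left] at this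
  rw [Finset.sum_congr rfl hconst, Finset.sum_const, smul_eq_mul] at hsum
  have hcard : (((Finset.univ : Finset (Fin n)) \ {j, k}).erase i).card = n - 3 := by
    rw [Finset.card_erase_of_mem himem, Finset.card_sdiff_of_subset (Finset.subset_univ _),
      Finset.card_insert_of_notMem (by simp [hjk]), Finset.card_singleton,
      Finset.card_univ, Fintype.card_fin]
    omega
  rw [hcard] at hsum
  -- now: D i j k i + (n-3) * D i j k l = N, and (n-2) * D i j k i = N
  have hDi : (n - 2) * D n i j k i = D n i j i j := case_c hn hij (Ne.symm hik) (Ne.symm hjk)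
  -- conclude (n-2) * D i j k l = N
  set A := D n i j k i
  set B := D n i j k l
  set N := D n i j i j
  have h1 : (n - 2) * N = (n - 2) * A + (n - 2) * ((n - 3) * B) := by
    rw [← Nat.mul_add, hsum]
  rw [hDi] at h1
  have e2 : (n - 2) * N = N + (n - 3) * N := by
    have h' : n - 2 = (n - 3) + 1 := by omega
    rw [h']; ring
  rw [e2] at h1
  have h2 : (n - 3) * N = (n - 2) * ((n - 3) * B) := Nat.add_left_cancel h1
  have h3 : (n - 3) * N = (n - 3) * ((n - 2) * B) := by rw [h2]; ring
  exact (Nat.eq_of_mul_eq_mul_left (by omega) h3).symm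

lemma cardK_mul (hn : 3 ≤ n) {i0 j0 : Fin n} (h : i0 ≠ j0) :
    (K n).card = (n - 1) * D n i0 j0 i0 j0 := by
  rw [Finset.card_eq_sum_card_fiberwise
    (f := fun σ => σ i0) (t := Finset.univ) (fun σ _ => Finset.mem_univ _)]
  have hz : ∀ x ∈ (Finset.univ : Finset (Fin n)),
      x ∉ (Finset.univ : Finset (Fin n)).erase i0 →
      ((K n).filter fun σ => σ i0 = x).card = 0 := by
    intro x _ hx
    simp only [Finset.mem_erase, Finset.mem_univ, and_true, not_not] at hx
    subst hx
    rw [N_eq]; exact D_diag_left _ _ _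
  rw [← Finset.sum_subset (Finset.subset_univ _) hz]
  have hconst : ∀ x ∈ (Finset.univ : Finset (Fin n)).erase i0,
      ((K n).filter fun σ => σ i0 = x).card = D n i0 j0 i0 j0 := by
    intro x hx
    simp only [Finset.mem_erase, Finset.mem_univ, and_true] at hx
    rw [N_eq]
    exact N_const hn (Ne.symm hx) h
  rw [Finset.sum_congr rfl hconst, Finset.sum_const, smul_eq_mul,
    Finset.card_erase_of_mem (Finset.mem_univ _), Finset.card_univ, Fintype.card_fin]

lemma rot_mem_K (hn : 3 ≤ n) : finRotate n ∈ K n :=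
  mem_K.mpr ⟨isCycle_finRotate_of_le (by omega), support_finRotate_of_le (by omega)⟩

open Fin.NatCast in
lemma cardK_eq (hn : 3 ≤ n) : (K n).card = (n - 1).factorial := by
  obtain ⟨m, rfl⟩ : ∃ m, n = m + 1 := ⟨n - 1, by omega⟩
  set z : Fin (m + 1) := ⟨0, by omega⟩ with hz
  set r : Equiv.Perm (Fin (m + 1)) := finRotate (m + 1) with hr
  have hrK : r ∈ K (m + 1) := rot_mem_K hn
  have hpow : ∀ k : ℕ, (r ^ k) z = (k : Fin (m + 1)) := by
    intro k
    induction k with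
    | zero => simp [hz]
    | succ a ih =>
      rw [pow_succ', Equiv.Perm.mul_apply, ih, hr, finRotate_succ_apply]
      push_cast
      ring
  have hpowv : ∀ k : Fin (m + 1), (r ^ (k : ℕ)) z = k := by
    intro k; rw [hpow, Fin.cast_val_eq_self]
  -- the stabilizer of z
  set Stab : Finset (Equiv.Perm (Fin (m + 1))) :=
    Finset.univ.filter (fun g => g z = z) with hStab
  -- fibers of evaluation at z all have the same cardinality
  have hfib : ∀ p : Fin (m + 1),
      ((Finset.univ : Finset (Equiv.Perm (Fin (m+1)))).filter fun g => g z = p).card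
        = Stab.card := by
    intro p
    rw [hStab]
    refine Finset.card_bij' (fun g _ => Equiv.swap p z * g) (fun g _ => Equiv.swap p z * g)
      ?_ ?_ ?_ ?_
    · intro g hg
      simp only [Finset.mem_filter, Finset.mem_univ, true_and] at hg ⊢
      rw [Equiv.Perm.mul_apply, hg, Equiv.swap_apply_left]
    · intro g hg
      simp only [Finset.mem_filter, Finset.mem_univ, true_and] at hg ⊢
      rw [Equiv.Perm.mul_apply, hg, Equiv.swap_apply_right]
    · intro g _; ext x; simp [Equiv.Perm.mul_apply]
    · intro g _; ext x; simp [Equiv.Perm.mul_apply]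
  have htot : (m + 1).factorial = (m + 1) * Stab.card := by
    have h1 : (Finset.univ : Finset (Equiv.Perm (Fin (m+1)))).card = (m + 1).factorial := by
      rw [Finset.card_univ, Fintype.card_perm, Fintype.card_fin]
    rw [← h1, Finset.card_eq_sum_card_fiberwise
      (f := fun g => g z) (t := Finset.univ) (fun g _ => Finset.mem_univ _)]
    rw [Finset.sum_congr rfl (fun p _ => hfib p), Finset.sum_const, smul_eq_mul,
      Finset.card_univ, Fintype.card_fin]
  -- bijection between Stab and K
  have hbij : Stab.card = (K (m + 1)).card := by
    refine Finset.card_bij (fun g _ => g * r * g⁻¹) ?_ ?_ ?_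
    · intro g hg
      exact conj_mem_K hrK g
    · intro g hg h hh heq
      simp only [hStab, Finset.mem_filter, Finset.mem_univ, true_and] at hg hh
      have hx : ∀ y, (h⁻¹ * g) y = y := by
        have hcomm : (h⁻¹ * g) * r = r * (h⁻¹ * g) := by
          have e1 : h⁻¹ * (g * r * g⁻¹) * g = h⁻¹ * (h * r * h⁻¹) * g := by rw [heq]
          calc h⁻¹ * g * r = h⁻¹ * (g * r * g⁻¹) * g := by group
            _ = h⁻¹ * (h * r * h⁻¹) * g := e1
            _ = r * (h⁻¹ * g) := by group
        intro y
        have hcp : (h⁻¹ * g) * r ^ (y : ℕ) = r ^ (y : ℕ) * (h⁻¹ * g) :=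
          (Commute.pow_right hcomm (y : ℕ))
        have hzz : (h⁻¹ * g) z = z := by
          rw [Equiv.Perm.mul_apply, hg]
          conv_lhs => rw [← hh]
          exact Equiv.symm_apply_apply h z
        calc (h⁻¹ * g) y = (h⁻¹ * g) ((r ^ (y : ℕ)) z) := by rw [hpowv]
          _ = ((h⁻¹ * g) * r ^ (y : ℕ)) z := rfl
          _ = (r ^ (y : ℕ) * (h⁻¹ * g)) z := by rw [hcp]
          _ = (r ^ (y : ℕ)) z := by rw [Equiv.Perm.mul_apply, hzz]
          _ = y := hpowv y
      have : h⁻¹ * g = 1 := Equiv.ext fun y => hx y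
      calc g = h * (h⁻¹ * g) := by group
        _ = h := by rw [this, mul_one]
    · intro σ hσ
      have hconj : IsConj r σ := by
        rcases mem_K.mp hrK with ⟨hc1, hs1⟩
        rcases mem_K.mp hσ with ⟨hc2, hs2⟩
        exact hc1.isConj hc2 (by rw [hs1, hs2])
      obtain ⟨g0, hg0⟩ := isConj_iff.mp hconj
      set k : Fin (m + 1) := g0⁻¹ z with hk
      refine ⟨g0 * r ^ (k : ℕ), ?_, ?_⟩
      · simp only [hStab, Finset.mem_filter, Finset.mem_univ, true_and]
        rw [Equiv.Perm.mul_apply, hpowv, hk]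
        simp
      · have hcr : r ^ (k : ℕ) * r = r * r ^ (k : ℕ) := by
          rw [← pow_succ, ← pow_succ']
        calc (g0 * r ^ (k : ℕ)) * r * (g0 * r ^ (k : ℕ))⁻¹
            = g0 * (r ^ (k : ℕ) * r * (r ^ (k : ℕ))⁻¹) * g0⁻¹ := by group
          _ = g0 * (r * r ^ (k : ℕ) * (r ^ (k : ℕ))⁻¹) * g0⁻¹ := by rw [hcr]
          _ = g0 * r * g0⁻¹ := by group
          _ = σ := hg0
  have hfin : (m + 1).factorial = (m + 1) * (K (m + 1)).card := by
    rw [htot, hbij]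
  have : (m + 1).factorial = (m + 1) * m.factorial := by
    rw [Nat.factorial_succ]
  rw [this] at hfin
  have := Nat.eq_of_mul_eq_mul_left (show 0 < m + 1 by omega) hfin
  simp only [Nat.add_sub_cancel]
  omega

variable (W : Matrix (Fin n) (Fin n) ℝ)

lemma sum_fib (i : Fin n) :
    ∑ σ ∈ K n, W i (σ i) = ∑ j, (D n i j i j : ℝ) * W i j := by
  have hfw := Finset.sum_fiberwise_of_maps_to (s := K n) (t := (Finset.univ : Finset (Fin n)))
    (g := fun σ => σ i) (fun σ _ => Finset.mem_univ _) (fun σ => W i (σ i))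
  rw [← hfw]
  refine Finset.sum_congr rfl fun j _ => ?_
  have hval : ∀ σ ∈ (K n).filter (fun σ => σ i = j), W i (σ i) = W i j := fun σ hσ => by
    simp only [Finset.mem_filter] at hσ; rw [hσ.2]
  rw [Finset.sum_congr rfl hval, Finset.sum_const, nsmul_eq_mul, N_eq]

lemma mean_zero (hdiag : ∀ i, W i i = 0) (hrow : ∀ i, ∑ j, W i j = 0)
    (c : ℝ) (hc : ∀ i j : Fin n, i ≠ j → (D n i j i j : ℝ) = c) :
    ∑ σ ∈ K n, ∑ i, W i (σ i) = 0 := by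
  rw [Finset.sum_comm]
  refine Finset.sum_eq_zero fun i _ => ?_
  rw [sum_fib]
  have : ∀ j : Fin n, (D n i j i j : ℝ) * W i j = c * W i j := by
    intro j
    rcases eq_or_ne i j with rfl | h
    · rw [hdiag]; ring
    · rw [hc i j h]
  rw [Finset.sum_congr rfl fun j _ => this j, ← Finset.mul_sum, hrow, mul_zero]

lemma inner_fib (i k : Fin n) :
    ∑ σ ∈ K n, W i (σ i) * W k (σ k)
      = ∑ j, ∑ l, (D n i j k l : ℝ) * (W i j * W k l) := by
  have hfw := Finset.sum_fiberwise_of_maps_to (s := K n)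
    (t := (Finset.univ : Finset (Fin n × Fin n)))
    (g := fun σ => (σ i, σ k)) (fun σ _ => Finset.mem_univ _)
    (fun σ => W i (σ i) * W k (σ k))
  rw [← hfw]
  rw [Fintype.sum_prod_type]
  refine Finset.sum_congr rfl fun j _ => Finset.sum_congr rfl fun l _ => ?_
  have hfe : (K n).filter (fun σ => (σ i, σ k) = (j, l))
      = (K n).filter (fun σ => σ i = j ∧ σ k = l) := by
    apply Finset.filter_congr; intro σ _; simp [Prod.ext_iff]
  have hval : ∀ σ ∈ (K n).filter (fun σ => σ i = j ∧ σ k = l),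
      W i (σ i) * W k (σ k) = W i j * W k l := fun σ hσ => by
    simp only [Finset.mem_filter] at hσ; rw [hσ.2.1, hσ.2.2]
  rw [Finset.sum_congr hfe hval, Finset.sum_const, nsmul_eq_mul]
  rfl

lemma F_diag (hdiag : ∀ i, W i i = 0)
    (c : ℝ) (hc : ∀ i j : Fin n, i ≠ j → (D n i j i j : ℝ) = c) (i : Fin n) :
    ∑ j, ∑ l, (D n i j i l : ℝ) * (W i j * W i l) = c * ∑ j, W i j ^ 2 := by
  rw [Finset.mul_sum]
  refine Finset.sum_congr rfl fun j _ => ?_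
  rw [Finset.sum_eq_single j (fun l _ hl => ?_) (fun h => absurd (Finset.mem_univ _) h)]
  · rcases eq_or_ne i j with rfl | h
    · rw [hdiag]; ring
    · rw [hc i j h]; ring
  · rw [D_same_i i (Ne.symm hl)]; simp

lemma F_off_point (hn : 3 ≤ n) (hdiag : ∀ i, W i i = 0) (E : ℝ)
    (hE : ∀ i j k l : Fin n, i ≠ j → k ≠ l → i ≠ k → j ≠ l → ¬(k = j ∧ l = i) →
      (D n i j k l : ℝ) = E)
    {i k : Fin n} (hik : i ≠ k) (j l : Fin n) :
    (D n i j k l : ℝ) * (W i j * W k l)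
      = E * (W i j * W k l - (if l = j then W i j * W k l else 0)
             - (if k = j ∧ l = i then W i j * W k l else 0)) := by
  rcases eq_or_ne l j with rfl | hlj
  · -- l = j
    have hcond : ¬(k = l ∧ l = i) := by rintro ⟨rfl, rfl⟩; exact hik rfl
    rw [if_pos rfl, if_neg hcond, D_same_j l hik]
    push_cast
    ring
  · rw [if_neg hlj]
    by_cases hrev : k = j ∧ l = i
    · obtain ⟨rfl, rfl⟩ := hrev
      rw [if_pos ⟨rfl, rfl⟩, D_rev hn]
      push_cast
      ring
    · rw [if_neg hrev]
      rcases eq_or_ne i j with rfl | hij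
      · rw [hdiag]; ring
      · rcases eq_or_ne k l with rfl | hkl
        · rw [hdiag]; ring
        · rw [hE i j k l hij hkl hik (Ne.symm hlj) hrev]
          ring

lemma F_off (hn : 3 ≤ n) (hdiag : ∀ i, W i i = 0) (hrow : ∀ i, ∑ j, W i j = 0) (E : ℝ)
    (hE : ∀ i j k l : Fin n, i ≠ j → k ≠ l → i ≠ k → j ≠ l → ¬(k = j ∧ l = i) →
      (D n i j k l : ℝ) = E)
    {i k : Fin n} (hik : i ≠ k) :
    ∑ j, ∑ l, (D n i j k l : ℝ) * (W i j * W k l)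
      = -(E * ((∑ j, W i j * W k j) + W i k * W k i)) := by
  rw [Finset.sum_congr rfl fun j _ => Finset.sum_congr rfl fun l _ =>
    F_off_point W hn hdiag E hE hik j l]
  have h1 : ∀ j : Fin n, ∑ l, (W i j * W k l) = 0 := by
    intro j; rw [← Finset.mul_sum, hrow, mul_zero]
  have h2 : ∀ j : Fin n, ∑ l, (if l = j then W i j * W k l else 0) = W i j * W k j := by
    intro j
    rw [Finset.sum_ite_eq' Finset.univ j (fun l => W i j * W k l)]
    simp
  have h3 : ∀ j : Fin n, ∑ l, (if k = j ∧ l = i then W i j * W k l else 0)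
      = if k = j then W i j * W k i else 0 := by
    intro j
    rcases eq_or_ne k j with rfl | h
    · simp only [true_and, if_pos rfl]
      rw [Finset.sum_ite_eq' Finset.univ i (fun l => W i k * W k l)]
      simp
    · simp [h]
  have expand : ∀ j : Fin n,
      ∑ l, (E * (W i j * W k l - (if l = j then W i j * W k l else 0)
             - (if k = j ∧ l = i then W i j * W k l else 0)))
      = E * (0 - W i j * W k j - (if k = j then W i j * W k i else 0)) := by
    intro j
    rw [← Finset.mul_sum, Finset.sum_sub_distrib, Finset.sum_sub_distrib, h1, h2, h3]
  rw [Finset.sum_congr rfl fun j _ => expand j, ← Finset.mul_sum]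
  rw [Finset.sum_sub_distrib, Finset.sum_sub_distrib]
  rw [Finset.sum_ite_eq Finset.univ k (fun j => W i j * W k i)]
  simp only [Finset.mem_univ, if_true, Finset.sum_const_zero]
  ring


lemma Q_formula (hn : 3 ≤ n) (hdiag : ∀ i, W i i = 0) (hrow : ∀ i, ∑ j, W i j = 0)
    (hcol : ∀ j, ∑ i, W i j = 0) (c E : ℝ)
    (hc : ∀ i j : Fin n, i ≠ j → (D n i j i j : ℝ) = c)
    (hE : ∀ i j k l : Fin n, i ≠ j → k ≠ l → i ≠ k → j ≠ l → ¬(k = j ∧ l = i) →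
      (D n i j k l : ℝ) = E) :
    ∑ σ ∈ K n, (∑ i, W i (σ i)) ^ 2
      = c * (∑ i, ∑ j, W i j ^ 2)
        + E * ((∑ i, ∑ j, W i j ^ 2) - (∑ i, ∑ j, W i j * W j i)) := by
  have step1 : ∀ σ : Equiv.Perm (Fin n),
      (∑ i, W i (σ i)) ^ 2 = ∑ i, ∑ k, W i (σ i) * W k (σ k) := by
    intro σ; rw [sq, Finset.sum_mul_sum]
  have hQ : ∑ σ ∈ K n, (∑ i, W i (σ i)) ^ 2
      = ∑ i, ∑ k, ∑ j, ∑ l, (D n i j k l : ℝ) * (W i j * W k l) := by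
    rw [Finset.sum_congr rfl fun σ _ => step1 σ, Finset.sum_comm]
    refine Finset.sum_congr rfl fun i _ => ?_
    rw [Finset.sum_comm]
    exact Finset.sum_congr rfl fun k _ => inner_fib W i k
  rw [hQ]
  have hsplit : ∀ i : Fin n, ∑ k, ∑ j, ∑ l, (D n i j k l : ℝ) * (W i j * W k l)
      = (c * ∑ j, W i j ^ 2)
        + (∑ k, -(E * ((∑ j, W i j * W k j) + W i k * W k i)))
        - (-(E * ((∑ j, W i j * W i j) + W i i * W i i))) := by
    intro i
    rw [← Finset.add_sum_erase _ _ (Finset.mem_univ i), F_diag W hdiag c hc i]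
    have hoff : ∀ k ∈ Finset.univ.erase i,
        ∑ j, ∑ l, (D n i j k l : ℝ) * (W i j * W k l)
          = -(E * ((∑ j, W i j * W k j) + W i k * W k i)) := by
      intro k hk
      simp only [Finset.mem_erase] at hk
      exact F_off W hn hdiag hrow E hE (Ne.symm hk.1)
    rw [Finset.sum_congr rfl hoff,
      Finset.sum_erase_eq_sub (f := fun k => -(E * ((∑ j, W i j * W k j) + W i k * W k i)))
        (Finset.mem_univ i)]
    ring
  rw [Finset.sum_congr rfl fun i _ => hsplit i]
  rw [Finset.sum_sub_distrib, Finset.sum_add_distrib]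
  have p1 : ∑ i, (c * ∑ j, W i j ^ 2) = c * ∑ i, ∑ j, W i j ^ 2 :=
    (Finset.mul_sum _ _ _).symm
  have E1 : ∑ i : Fin n, ∑ k : Fin n, (∑ j, W i j * W k j) = 0 := by
    refine Finset.sum_eq_zero fun i _ => ?_
    rw [Finset.sum_comm]
    refine Finset.sum_eq_zero fun j _ => ?_
    rw [← Finset.mul_sum, hcol, mul_zero]
  have p2 : ∑ i : Fin n, ∑ k : Fin n, -(E * ((∑ j, W i j * W k j) + W i k * W k i))
      = -(E * (∑ i, ∑ k, W i k * W k i)) := by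
    have expand : ∀ i k : Fin n, -(E * ((∑ j, W i j * W k j) + W i k * W k i))
        = -(E * (∑ j, W i j * W k j)) + -(E * (W i k * W k i)) := by
      intro i k; ring
    rw [Finset.sum_congr rfl fun i _ => Finset.sum_congr rfl fun k _ => expand i k]
    rw [Finset.sum_congr rfl fun i _ => Finset.sum_add_distrib, Finset.sum_add_distrib]
    have q1 : ∑ i : Fin n, ∑ k : Fin n, -(E * (∑ j, W i j * W k j)) = 0 := by
      simp only [Finset.sum_neg_distrib, ← Finset.mul_sum]
      rw [E1, mul_zero, neg_zero]
    have q2 : ∑ i : Fin n, ∑ k : Fin n, -(E * (W i k * W k i))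
        = -(E * (∑ i, ∑ k, W i k * W k i)) := by
      simp only [Finset.sum_neg_distrib, ← Finset.mul_sum]
    rw [q1, q2, zero_add]
  have p3 : ∑ i : Fin n, -(E * ((∑ j, W i j * W i j) + W i i * W i i))
      = -(E * (∑ i, ∑ j, W i j ^ 2)) := by
    have expand : ∀ i : Fin n, -(E * ((∑ j, W i j * W i j) + W i i * W i i))
        = -(E * (∑ j, W i j ^ 2)) := by
      intro i
      rw [hdiag i, Finset.sum_congr rfl fun j _ => (sq (W i j)).symm]
      ring
    rw [Finset.sum_congr rfl fun i _ => expand i]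
    simp only [Finset.sum_neg_distrib, ← Finset.mul_sum]
  rw [p1, p2, p3]
  ring

lemma SP_le (W : Matrix (Fin n) (Fin n) ℝ) :
    (∑ i, ∑ j, W i j * W j i) ≤ ∑ i, ∑ j, W i j ^ 2 := by
  have h : (0:ℝ) ≤ ∑ i, ∑ j, (W i j - W j i) ^ 2 :=
    Finset.sum_nonneg fun i _ => Finset.sum_nonneg fun j _ => sq_nonneg _
  have comm : ∑ i : Fin n, ∑ j : Fin n, (W j i) ^ 2 = ∑ i, ∑ j, W i j ^ 2 :=
    Finset.sum_comm
  have split : ∑ i, ∑ j, (W i j - W j i) ^ 2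
      = (∑ i, ∑ j, W i j ^ 2) - 2 * (∑ i, ∑ j, W i j * W j i) + (∑ i, ∑ j, W i j ^ 2) := by
    have e : ∀ i j : Fin n, (W i j - W j i) ^ 2
        = W i j ^ 2 - 2 * (W i j * W j i) + (W j i) ^ 2 := by intro i j; ring
    rw [Finset.sum_congr rfl fun i _ => Finset.sum_congr rfl fun j _ => e i j]
    simp only [Finset.sum_add_distrib, Finset.sum_sub_distrib]
    rw [comm]
    simp only [← Finset.mul_sum]
  rw [split] at h
  linarith

end VarCyc

open VarCyc in
/-- For `n ≥ 3` and an `n×n` real matrix `W` with zero diagonal and all row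
and column sums zero, the variance of `σ ↦ ∑ᵢ W_{i,σ(i)}` over a uniformly random
`n`-cycle (there are `(n−1)!` of them) is at least `‖W‖_F²/((n−1)(n−2))`. -/
theorem variance_cyclic_permutation_sum_lower_bound (n : ℕ) (hn : 3 ≤ n)
    (W : Matrix (Fin n) (Fin n) ℝ)
    (hdiag : ∀ i, W i i = 0)
    (hrow : ∀ i, ∑ j, W i j = 0) (hcol : ∀ j, ∑ i, W i j = 0) :
    (((n - 1).factorial : ℝ)⁻¹ *
        ∑ σ ∈ (Finset.univ : Finset (Equiv.Perm (Fin n))).filter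
          (fun σ => σ.IsCycle ∧ σ.support = Finset.univ), (∑ i, W i (σ i)) ^ 2)
      - (((n - 1).factorial : ℝ)⁻¹ *
          ∑ σ ∈ (Finset.univ : Finset (Equiv.Perm (Fin n))).filter
            (fun σ => σ.IsCycle ∧ σ.support = Finset.univ), ∑ i, W i (σ i)) ^ 2
      ≥ (∑ i, ∑ j, W i j ^ 2) / (((n : ℝ) - 1) * ((n : ℝ) - 2)) := by
  have hKset : (Finset.univ : Finset (Equiv.Perm (Fin n))).filter
      (fun σ => σ.IsCycle ∧ σ.support = Finset.univ) = K n := rfl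
  rw [hKset]
  set z : Fin n := ⟨0, by omega⟩ with hzdef
  set o : Fin n := ⟨1, by omega⟩ with hodef
  have hzo : z ≠ o := by simp [hzdef, hodef, Fin.ext_iff]
  set cn : ℕ := D n z o z o with hcn
  set c : ℝ := (cn : ℝ) with hcR
  have hc : ∀ i j : Fin n, i ≠ j → (D n i j i j : ℝ) = c := by
    intro i j h
    rw [hcR, hcn]
    exact_mod_cast congrArg (Nat.cast : ℕ → ℝ) (N_const hn h hzo)
  have hn3 : (3 : ℝ) ≤ (n : ℝ) := by exact_mod_cast hn
  have hn2 : ((n : ℝ) - 2) ≠ 0 := by linarith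
  set E : ℝ := c / ((n : ℝ) - 2) with hEdef
  have hE : ∀ i j k l : Fin n, i ≠ j → k ≠ l → i ≠ k → j ≠ l → ¬(k = j ∧ l = i) →
      (D n i j k l : ℝ) = E := by
    intro i j k l hij hkl hik hjl hrev
    have hnat : (n - 2) * D n i j k l = cn := by
      rcases eq_or_ne k j with rfl | hkj
      · have hli : l ≠ i := fun h => hrev ⟨rfl, h⟩
        rw [case_b hn hij hli (Ne.symm hkl)]
        exact N_const hn hij hzo
      · rcases eq_or_ne l i with rfl | hli
        · rw [case_c hn hij (Ne.symm hik) hkj]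
          exact N_const hn hij hzo
        · rw [case_a hn hij hik (Ne.symm hli) (Ne.symm hkj) hjl hkl]
          exact N_const hn hij hzo
    have hcast : ((n : ℝ) - 2) * (D n i j k l : ℝ) = c := by
      have h2 := congrArg (Nat.cast : ℕ → ℝ) hnat
      rw [Nat.cast_mul, Nat.cast_sub (show (2:ℕ) ≤ n by omega)] at h2
      rw [hcR]
      exact_mod_cast h2
    rw [hEdef, eq_div_iff hn2, mul_comm]
    exact hcast
  have hmean := mean_zero W hdiag hrow c hc
  have hQ := Q_formula W hn hdiag hrow hcol c E hc hE
  set S : ℝ := ∑ i, ∑ j, W i j ^ 2 with hSdef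
  set P : ℝ := ∑ i, ∑ j, W i j * W j i with hPdef
  have hfact : ((n - 1).factorial : ℝ) = ((n : ℝ) - 1) * c := by
    have h1 := cardK_eq hn
    have h2 := cardK_mul hn hzo
    have h3 : (n - 1).factorial = (n - 1) * cn := by rw [← h1, h2]
    have h4 := congrArg (Nat.cast : ℕ → ℝ) h3
    rw [Nat.cast_mul, Nat.cast_sub (show (1:ℕ) ≤ n by omega)] at h4
    rw [h4, hcR]
    norm_num
  have hfpos : (0 : ℝ) < ((n - 1).factorial : ℝ) := by
    exact_mod_cast Nat.factorial_pos _
  have hn1pos : (0 : ℝ) < (n : ℝ) - 1 := by linarith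
  have hcpos : (0 : ℝ) < c := by nlinarith [hfact, hfpos, hn1pos]
  have hSpos : (0 : ℝ) ≤ S :=
    Finset.sum_nonneg fun i _ => Finset.sum_nonneg fun j _ => sq_nonneg _
  have hSP : P ≤ S := SP_le W
  have hEpos : (0 : ℝ) ≤ E := by
    rw [hEdef]
    exact div_nonneg hcpos.le (by linarith)
  rw [hmean, hQ, mul_zero]
  rw [show ((0:ℝ))^2 = 0 by ring, sub_zero]
  have key1 : ((n - 1).factorial : ℝ)⁻¹ * (c * S) = S / ((n : ℝ) - 1) := by
    rw [hfact]
    field_simp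
  have key2 : ((n - 1).factorial : ℝ)⁻¹ * (c * S + E * (S - P))
      ≥ ((n - 1).factorial : ℝ)⁻¹ * (c * S) := by
    apply mul_le_mul_of_nonneg_left _ (by positivity)
    nlinarith [mul_nonneg hEpos (by linarith : (0:ℝ) ≤ S - P)]
  have key3 : S / ((n : ℝ) - 1) ≥ S / (((n : ℝ) - 1) * ((n : ℝ) - 2)) := by
    rw [ge_iff_le, div_le_div_iff₀ (by nlinarith) hn1pos]
    have hle : (n:ℝ) - 1 ≤ ((n:ℝ) - 1) * ((n:ℝ) - 2) := by nlinarith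
    nlinarith [mul_le_mul_of_nonneg_left hle hSpos]
  calc ((n - 1).factorial : ℝ)⁻¹ * (c * S + E * (S - P))
      ≥ ((n - 1).factorial : ℝ)⁻¹ * (c * S) := key2
    _ = S / ((n : ℝ) - 1) := key1
    _ ≥ S / (((n : ℝ) - 1) * ((n : ℝ) - 2)) := key3
end

section
/- Let A be a symmetric real n×n matrix with nonnegative entries and zero diagonal, and let s ∈ {−1,1}^n be a strict local maximum cut, meaning that for every i ∈ {1,…,n}, s_i·∑_{j} A_{ij} s_j < 0. Fix ε ∈ (0,1/2) and let p ∈ [ε,1−ε]^n be the vertex p = (1 + (1−2ε)s)/2, i.e., p_i = 1−ε if s_i = 1 and p_i = ε if s_i = −1. Define the product-distribution Max-Cut loss L(p) = ∑_{i,j} A_{ij}(2p_i−1)(2p_j−1). Then for every i ∈ {1,…,n}, the gradient satisfies (∇L(p))_i · s_i < 0; in other words, at p the negative gradient points outward along every coordinate of the box [ε,1−ε]^n, so p is a (highly sub-optimal) stationary point of projected gradient descent on [ε,1−ε]^n. -/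
open Finset
open scoped BigOperators

/-- Let `A` be a symmetric nonnegative `n×n` matrix with zero diagonal and
let `s ∈ {−1,1}^n` be a strict local maximum cut (`sᵢ·∑ⱼ Aᵢⱼsⱼ < 0` for every `i`). For
`ε ∈ (0,1/2)` and the vertex `p = (1 + (1−2ε)s)/2` of the box `[ε,1−ε]^n`, the
product-distribution Max-Cut loss `L(q) = ∑_{i,j} Aᵢⱼ(2qᵢ−1)(2qⱼ−1)` satisfies
`(∇L(p))ᵢ · sᵢ < 0` for every `i`: the negative gradient points outward along every
coordinate of the box, so `p` is a stationary point of projected gradient descent. -/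
theorem maxcut_product_bad_stationary_point (n : ℕ) (A : Matrix (Fin n) (Fin n) ℝ)
    (hsym : A.IsSymm) (hnn : ∀ i j, 0 ≤ A i j) (hdiag : ∀ i, A i i = 0)
    (s : Fin n → ℝ) (hs : ∀ i, s i = 1 ∨ s i = -1)
    (hlocal : ∀ i, s i * ∑ j, A i j * s j < 0)
    (ε : ℝ) (hε : ε ∈ Set.Ioo (0 : ℝ) (1 / 2))
    (p : EuclideanSpace ℝ (Fin n)) (hp : ∀ i, p i = (1 + (1 - 2 * ε) * s i) / 2)
    (L : EuclideanSpace ℝ (Fin n) → ℝ)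
    (hL : L = fun q => ∑ i, ∑ j, A i j * (2 * q i - 1) * (2 * q j - 1)) :
    ∀ i, gradient L p i * s i < 0 := by
  have hAsym : ∀ a b, A a b = A b a := fun a b => (Matrix.IsSymm.apply hsym b a)
  set g : EuclideanSpace ℝ (Fin n) := WithLp.toLp 2 (fun k => 4 * ∑ j, A k j * (2 * p j - 1)) with hg
  have hD : HasFDerivAt L
      (∑ a, ∑ b, (A a b) • ((2 * p a - 1) • ((2:ℝ) • (EuclideanSpace.proj b : EuclideanSpace ℝ (Fin n) →L[ℝ] ℝ)) + (2 * p b - 1) • ((2:ℝ) • (EuclideanSpace.proj a : EuclideanSpace ℝ (Fin n) →L[ℝ] ℝ)))) p := by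
    rw [hL]
    apply HasFDerivAt.fun_sum
    intro a _
    apply HasFDerivAt.fun_sum
    intro b _
    have h1 : HasFDerivAt (fun q : EuclideanSpace ℝ (Fin n) => 2 * q a - 1)
        ((2:ℝ) • (EuclideanSpace.proj a : EuclideanSpace ℝ (Fin n) →L[ℝ] ℝ)) p :=
      by exact (((EuclideanSpace.proj a : EuclideanSpace ℝ (Fin n) →L[ℝ] ℝ).hasFDerivAt).const_mul (2:ℝ)).sub_const 1
    have h2 : HasFDerivAt (fun q : EuclideanSpace ℝ (Fin n) => 2 * q b - 1)
        ((2:ℝ) • (EuclideanSpace.proj b : EuclideanSpace ℝ (Fin n) →L[ℝ] ℝ)) p :=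
      by exact (((EuclideanSpace.proj b : EuclideanSpace ℝ (Fin n) →L[ℝ] ℝ).hasFDerivAt).const_mul (2:ℝ)).sub_const 1
    have := (h1.mul h2).const_mul (A a b)
    simpa [mul_assoc] using this
  have hgrad : HasGradientAt L g p := by
    rw [hasGradientAt_iff_hasFDerivAt]
    refine hD.congr_fderiv ?_
    symm
    apply ContinuousLinearMap.ext
    intro v
    simp only [InnerProductSpace.toDual_apply_apply, PiLp.inner_apply, RCLike.inner_apply', PiLp.toLp_apply,
      starRingEnd_apply, star_trivial, ContinuousLinearMap.sum_apply,
      ContinuousLinearMap.smul_apply, ContinuousLinearMap.add_apply,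
      PiLp.proj_apply, smul_eq_mul, hg]
    have key : ∀ a b : Fin n,
        A a b * ((2 * p a - 1) * (2 * v b) + (2 * p b - 1) * (2 * v a))
        = A a b * (2 * p b - 1) * (2 * v a) + A a b * (2 * p a - 1) * (2 * v b) := by
      intro a b; ring
    rw [show (∑ a, (4 * ∑ j, A a j * (2 * p j - 1)) * v a)
        = (∑ a, ∑ b, A a b * (2 * p b - 1) * (2 * v a))
          + (∑ a, ∑ b, A a b * (2 * p b - 1) * (2 * v a)) from by
      rw [← two_mul, Finset.mul_sum]
      apply Finset.sum_congr rfl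
      intro a _
      rw [Finset.mul_sum, Finset.sum_mul, Finset.mul_sum]
      apply Finset.sum_congr rfl
      intro b _
      ring]
    have h2 : (∑ a, ∑ b, A a b * (2 * p a - 1) * (2 * v b))
        = (∑ a, ∑ b, A a b * (2 * p b - 1) * (2 * v a)) := by
      rw [Finset.sum_comm]
      apply Finset.sum_congr rfl; intro a _
      apply Finset.sum_congr rfl; intro b _
      rw [hAsym a b]
    calc (∑ a, ∑ b, A a b * (2 * p b - 1) * (2 * v a))
          + (∑ a, ∑ b, A a b * (2 * p b - 1) * (2 * v a))
        = (∑ a, ∑ b, A a b * (2 * p b - 1) * (2 * v a))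
          + (∑ a, ∑ b, A a b * (2 * p a - 1) * (2 * v b)) := by rw [h2]
      _ = ∑ a, ∑ b, (A a b * (2 * p b - 1) * (2 * v a) + A a b * (2 * p a - 1) * (2 * v b)) := by
          rw [← Finset.sum_add_distrib]
          apply Finset.sum_congr rfl; intro a _
          rw [← Finset.sum_add_distrib]
      _ = ∑ a, ∑ b, A a b * ((2 * p a - 1) * (2 * v b) + (2 * p b - 1) * (2 * v a)) := by
          apply Finset.sum_congr rfl; intro a _
          apply Finset.sum_congr rfl; intro b _
          ring
  intro i
  have hgi : gradient L p i = 4 * ∑ j, A i j * (2 * p j - 1) := by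
    rw [hgrad.gradient]
  have hpj : ∀ j, 2 * p j - 1 = (1 - 2 * ε) * s j := by
    intro j; rw [hp j]; ring
  have : gradient L p i * s i = 4 * (1 - 2 * ε) * (s i * ∑ j, A i j * s j) := by
    rw [hgi]
    simp only [hpj]
    rw [Finset.mul_sum, Finset.sum_mul, Finset.mul_sum, Finset.mul_sum]
    apply Finset.sum_congr rfl; intro j _; ring
  rw [this]
  have hpos : (0:ℝ) < 4 * (1 - 2 * ε) := by
    have := hε.2; nlinarith
  exact mul_neg_of_pos_of_neg hpos (hlocal i)
end
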